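/- There exist countably many sets A_m ⊆ 2^ω (m ∈ ℕ) with ⋃_{m∈ℕ} A_m = 2^ω and, for each m, a perfect set P_m ⊆ 2^ω such that the translates A_m + x, x ∈ P_m, are pairwise disjoint. In other words, 2^ω belongs to the σ-ideal I₀* generated by the family F₀* of all (not necessarily Borel) sets A ⊆ 2^ω for which some perfect set P ⊆ 2^ω makes the family {A + x : x ∈ P} disjoint; hence I₀* is not a proper ideal. -/

import Mathlib

open Set

/-- The Cantor group `2^ω`: functions `ℕ → ZMod 2` with the product topology and
coordinatewise addition modulo 2. -/
abbrev CantorSp : Type := ℕ → ZMod 2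

/-- The translate `A + x` of a set `A ⊆ 2^ω` by `x ∈ 2^ω`. -/
def cTranslate (A : Set CantorSp) (x : CantorSp) : Set CantorSp := (fun a => a + x) '' A

noncomputable section StmtAux

open Classical

/-- Restriction of `x : 2^ω` to the first `k` coordinates. -/
def rrC (k : ℕ) (x : CantorSp) : Fin k → ZMod 2 := fun i => x i

/-- Codes for basic prefix conditions. -/
abbrev CodeC : Type := Σ n : ℕ, Fin n → ZMod 2

/-- An injection from codes into `ℕ`. -/
def eeC : CodeC → ℕ := (exists_injective_nat CodeC).choose

lemma eeC_inj : Function.Injective eeC := (exists_injective_nat CodeC).choose_spec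

/-- The basic map sending `x` to the indicator of the set of its finite prefixes.
Its range is a perfect linearly independent subset of the Cantor group. -/
def phiC (x : CantorSp) : CantorSp := fun k =>
  if ∃ p : CodeC, eeC p = k ∧ rrC p.1 x = p.2 then 1 else 0

lemma phiC_apply (x : CantorSp) (p : CodeC) :
    phiC x (eeC p) = if rrC p.1 x = p.2 then 1 else 0 := by
  unfold phiC
  by_cases h : rrC p.1 x = p.2
  · rw [if_pos ⟨p, rfl, h⟩, if_pos h]
  · rw [if_neg, if_neg h]
    rintro ⟨q, hq, hq2⟩
    exact h (by rwa [eeC_inj hq] at hq2)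

lemma phiC_injective : Function.Injective phiC := by
  intro x y hxy
  funext n
  have h := congrFun hxy (eeC ⟨n + 1, rrC (n + 1) x⟩)
  rw [phiC_apply, phiC_apply, if_pos rfl] at h
  by_cases h2 : rrC (n + 1) y = rrC (n + 1) x
  · exact (congrFun h2 ⟨n, n.lt_succ_self⟩).symm
  · rw [if_neg h2] at h; exact absurd h one_ne_zero

lemma rrC_continuous (k : ℕ) : Continuous (rrC k) :=
  continuous_pi fun i => continuous_apply (i : ℕ)

lemma phiC_continuous : Continuous phiC := by
  refine continuous_pi fun k => ?_
  by_cases h : ∃ p : CodeC, eeC p = k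
  · obtain ⟨p, rfl⟩ := h
    have : (fun x => phiC x (eeC p)) =
        (fun s : Fin p.1 → ZMod 2 => if s = p.2 then (1 : ZMod 2) else 0) ∘ rrC p.1 := by
      funext x; simp [phiC_apply]
    rw [this]
    exact (continuous_of_discreteTopology).comp (rrC_continuous p.1)
  · have : (fun x => phiC x k) = fun _ => (0 : ZMod 2) := by
      funext x
      unfold phiC
      rw [if_neg]
      rintro ⟨q, hq, -⟩
      exact h ⟨q, hq⟩
    rw [this]; exact continuous_const

/-- Distinguishing finitely many points by a finite prefix. -/
lemma exists_rr_inj (F : Finset CantorSp) :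
    ∃ n : ℕ, ∀ x ∈ F, ∀ y ∈ F, rrC n x = rrC n y → x = y := by
  have hw : ∀ x y : CantorSp, x ≠ y → ∃ m, x m ≠ y m := by
    intro x y hxy
    by_contra h
    push_neg at h
    exact hxy (funext h)
  choose w hwspec using hw
  refine ⟨F.sup fun x => F.sup fun y => if h : x = y then 0 else w x y h + 1, ?_⟩
  intro x hx y hy hr
  by_contra hne
  have hm : w x y hne + 1 ≤ F.sup fun x => F.sup fun y => if h : x = y then 0 else w x y h + 1 := by
    calc w x y hne + 1 = if h : x = y then 0 else w x y h + 1 := by rw [dif_neg hne]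
    _ ≤ F.sup fun y => if h : x = y then 0 else w x y h + 1 :=
        Finset.le_sup (f := fun y => if h : x = y then 0 else w x y h + 1) hy
    _ ≤ _ := Finset.le_sup (f := fun x => F.sup fun y => if h : x = y then 0 else w x y h + 1) hx
  exact hwspec x y hne (congrFun hr ⟨w x y hne, hm⟩)

/-- Key independence fact: a sum of `phiC`'s over a finset vanishes only if the
finset is empty. -/
lemma sum_phiC_eq_zero (F : Finset CantorSp) (h : (∑ x ∈ F, phiC x) = 0) : F = ∅ := by
  by_contra hne
  obtain ⟨x₀, hx₀⟩ := Finset.nonempty_of_ne_empty hne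
  obtain ⟨n, hn⟩ := exists_rr_inj F
  have h1 := congrFun h (eeC ⟨n, rrC n x₀⟩)
  rw [Finset.sum_apply] at h1
  have h2 : ∀ x ∈ F, phiC x (eeC ⟨n, rrC n x₀⟩) = if x = x₀ then 1 else 0 := by
    intro x hx
    rw [phiC_apply]
    by_cases hxx : x = x₀
    · subst hxx; rw [if_pos rfl, if_pos rfl]
    · rw [if_neg hxx, if_neg fun hc => hxx (hn x hx x₀ hx₀ hc)]
  rw [Finset.sum_congr rfl h2, Finset.sum_ite_eq' F x₀ (fun _ => (1 : ZMod 2)), if_pos hx₀] at h1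
  simp at h1

lemma add_self_C (v : CantorSp) : v + v = 0 := by
  have h2 : ∀ a : ZMod 2, a + a = 0 := by decide
  funext n; exact h2 (v n)

lemma eq_of_add_eq_zero_C {v w : CantorSp} (h : v + w = 0) : v = w := by
  have := congrArg (· + w) h
  simpa [add_assoc, add_self_C] using this

/-- Sum over a symmetric difference (characteristic 2). -/
lemma sum_symmDiff_C (F G : Finset CantorSp) :
    ∑ x ∈ symmDiff F G, phiC x = (∑ x ∈ F, phiC x) + ∑ x ∈ G, phiC x := by
  have h1 : ∑ x ∈ symmDiff F G, phiC x = (∑ x ∈ F \ G, phiC x) + ∑ x ∈ G \ F, phiC x := by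
    rw [symmDiff_def, Finset.sup_eq_union, Finset.sum_union disjoint_sdiff_sdiff]
  have h2 : (∑ x ∈ F ∩ G, phiC x) + ∑ x ∈ F \ G, phiC x = ∑ x ∈ F, phiC x :=
    Finset.sum_inter_add_sum_sdiff F G phiC
  have h3 : (∑ x ∈ G ∩ F, phiC x) + ∑ x ∈ G \ F, phiC x = ∑ x ∈ G, phiC x :=
    Finset.sum_inter_add_sum_sdiff G F phiC
  have key : ∀ c a b : CantorSp, (c + a) + (c + b) = a + b := by
    intro c a b
    calc (c + a) + (c + b) = (c + c) + (a + b) := by abel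
      _ = a + b := by rw [add_self_C, zero_add]
  rw [← h2, ← h3, Finset.inter_comm G F, key, h1]

/-- Basic cylinders. -/
def CylC (k : ℕ) (s : Fin k → ZMod 2) : Set CantorSp := rrC k ⁻¹' {s}

lemma CylC_nonempty (k : ℕ) (s : Fin k → ZMod 2) : (CylC k s).Nonempty := by
  refine ⟨fun n => if h : n < k then s ⟨n, h⟩ else 0, ?_⟩
  show rrC k _ = s
  funext i
  simp [rrC, i.isLt]

lemma CylC_perfect (k : ℕ) (s : Fin k → ZMod 2) : Perfect (CylC k s) := by
  constructor
  · exact IsClosed.preimage (rrC_continuous k) isClosed_singleton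
  · rw [preperfect_iff_nhds]
    intro x hx U hU
    obtain ⟨V, hVU, hVopen, hxV⟩ := mem_nhds_iff.1 hU
    obtain ⟨I, u, hu, hIu⟩ := isOpen_pi_iff.1 hVopen x hxV
    set j : ℕ := max k (I.sup fun i => i + 1) with hj
    have hjk : k ≤ j := le_max_left _ _
    have hjI : j ∉ I := by
      intro hmem
      have : j + 1 ≤ I.sup fun i => i + 1 := Finset.le_sup hmem
      have : I.sup (fun i => i + 1) ≤ j := le_max_right _ _
      omega
    refine ⟨Function.update x j (x j + 1), ⟨?_, ?_⟩, ?_⟩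
    · apply hVU
      apply hIu
      intro i hi
      rw [Function.update_of_ne (by rintro rfl; exact hjI hi)]
      exact (hu i hi).2
    · show rrC k _ = s
      funext i
      have : (i : ℕ) ≠ j := by have := i.isLt; omega
      rw [show rrC k (Function.update x j (x j + 1)) i
            = Function.update x j (x j + 1) (i : ℕ) from rfl,
        Function.update_of_ne this]
      exact congrFun hx i
    · intro hcontra
      have := congrFun hcontra j
      rw [Function.update_self] at this
      have h2 : ∀ a : ZMod 2, a + 1 ≠ a := by decide
      exact h2 (x j) this

lemma phiC_image_perfect {C : Set CantorSp} (hC : Perfect C) : Perfect (phiC '' C) := by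
  constructor
  · exact ((hC.closed.isCompact).image phiC_continuous).isClosed
  · rw [preperfect_iff_nhds]
    rintro - ⟨x, hxC, rfl⟩ U hU
    have hpre : phiC ⁻¹' U ∈ nhds x := phiC_continuous.continuousAt.preimage_mem_nhds hU
    obtain ⟨y, ⟨hyU, hyC⟩, hyx⟩ := (preperfect_iff_nhds.1 hC.acc) x hxC _ hpre
    exact ⟨phiC y, ⟨hyU, mem_image_of_mem _ hyC⟩, fun hc => hyx (phiC_injective hc)⟩

/-- Membership transfer along an equality of color data. -/
lemma mem_of_col_eq {F : Finset CantorSp} {k : ℕ} {T : Finset (Fin k → ZMod 2)}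
    (h : (⟨F.card + 1, F.image (rrC (F.card + 1))⟩ : Σ n : ℕ, Finset (Fin n → ZMod 2))
      = ⟨k, T⟩) {t : CantorSp} (ht : t ∈ F) : rrC k t ∈ T := by
  obtain ⟨h1, h2⟩ := Sigma.mk.inj_iff.1 h
  subst h1
  rw [← eq_of_heq h2]
  exact Finset.mem_image_of_mem _ ht

end StmtAux

/-- `2^ω` is a countable union of sets `A_m` each of which admits a perfect set `P_m`
of translations making `{A_m + x : x ∈ P_m}` pairwise disjoint; i.e. `2^ω` belongs to
the σ-ideal `I₀*` generated by the family `F₀*`, so `I₀*` is not proper. -/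
theorem stmt6 :
    ∃ A : ℕ → Set CantorSp, (⋃ m, A m) = Set.univ ∧
      ∀ m : ℕ, ∃ P : Set CantorSp, Perfect P ∧ P.Nonempty ∧
        P.Pairwise fun x y => Disjoint (cTranslate (A m) x) (cTranslate (A m) y) := by
  classical
  -- the span of the range of `phiC` and a linear complement
  set W : Submodule (ZMod 2) CantorSp := Submodule.span (ZMod 2) (Set.range phiC) with hW
  obtain ⟨U, hUc⟩ := Submodule.exists_isCompl W
  -- decompose every point
  have hdecomp : ∀ z : CantorSp, ∃ (u : CantorSp) (F : Finset CantorSp),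
      u ∈ U ∧ z = u + ∑ x ∈ F, phiC x := by
    intro z
    have hz : z ∈ W ⊔ U := by rw [hUc.sup_eq_top]; trivial
    obtain ⟨w, hwW, u, huU, hwu⟩ := Submodule.mem_sup.1 hz
    obtain ⟨c, hc⟩ := Finsupp.mem_span_range_iff_exists_finsupp.1 hwW
    refine ⟨u, c.support, huU, ?_⟩
    have hone : ∀ a : ZMod 2, a ≠ 0 → a = 1 := by decide
    have : (c.sum fun i a => a • phiC i) = ∑ x ∈ c.support, phiC x := by
      rw [Finsupp.sum]
      refine Finset.sum_congr rfl fun x hx => ?_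
      rw [hone _ (Finsupp.mem_support_iff.1 hx), one_smul]
    rw [← hwu, ← hc, this, add_comm]
  choose uu FF huU hzeq using hdecomp
  -- countable color data
  have hcount : Countable (Σ k : ℕ, Finset (Fin k → ZMod 2)) := inferInstance
  obtain ⟨enc, henc⟩ := exists_injective_nat (Σ k : ℕ, Finset (Fin k → ZMod 2))
  set col : CantorSp → Σ k : ℕ, Finset (Fin k → ZMod 2) :=
    fun z => ⟨(FF z).card + 1, (FF z).image (rrC ((FF z).card + 1))⟩ with hcol
  refine ⟨fun m => {z | enc (col z) = m}, ?_, ?_⟩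
  · ext z
    simp only [Set.mem_iUnion, Set.mem_setOf_eq, Set.mem_univ, iff_true]
    exact ⟨enc (col z), rfl⟩
  · intro m
    by_cases hm : ∃ z : CantorSp, enc (col z) = m
    · obtain ⟨z₀, hz₀⟩ := hm
      set k : ℕ := (FF z₀).card + 1 with hk
      set T : Finset (Fin k → ZMod 2) := (FF z₀).image (rrC k) with hT
      have hTex : ∃ s : Fin k → ZMod 2, s ∉ T := by
        by_contra hc
        push_neg at hc
        have huniv : T = Finset.univ := Finset.eq_univ_iff_forall.2 hc
        have hcard : T.card ≤ (FF z₀).card := Finset.card_image_le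
        have : Fintype.card (Fin k → ZMod 2) = 2 ^ k := by
          simp [Fintype.card_fun]
        rw [huniv, Finset.card_univ, this] at hcard
        have : k < 2 ^ k := Nat.lt_two_pow_self
        omega
      set τ : Fin k → ZMod 2 := hTex.choose with hτ
      have hτT : τ ∉ T := hTex.choose_spec
      refine ⟨phiC '' CylC k τ, phiC_image_perfect (CylC_perfect k τ),
        (CylC_nonempty k τ).image phiC, ?_⟩
      rintro x ⟨p, hp, rfl⟩ y ⟨q, hq, rfl⟩ hxy
      rw [Set.disjoint_left]
      rintro v ⟨a, ha, rfl⟩ ⟨b, hb, hab⟩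
      -- col a = col b = ⟨k, T⟩
      have hcola : col a = (⟨k, T⟩ : Σ k : ℕ, Finset (Fin k → ZMod 2)) := by
        apply henc
        rw [ha, ← hz₀]
      have hcolb : col b = (⟨k, T⟩ : Σ k : ℕ, Finset (Fin k → ZMod 2)) := by
        apply henc
        rw [hb, ← hz₀]
      have hpq : p ≠ q := fun hc => hxy (by rw [hc])
      -- from b + phiC q = a + phiC p derive the algebraic identity
      have hEq : b + phiC q = a + phiC p := hab
      have hud : uu a - uu b = (∑ x ∈ FF b, phiC x + phiC q) - (∑ x ∈ FF a, phiC x + phiC p) := by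
        have h1 : a = uu a + ∑ x ∈ FF a, phiC x := hzeq a
        have h2 : b = uu b + ∑ x ∈ FF b, phiC x := hzeq b
        rw [h1, h2] at hEq
        linear_combination -hEq
      have hudW : uu a - uu b ∈ W := by
        rw [hud]
        have hmem : ∀ t : CantorSp, phiC t ∈ W :=
          fun t => Submodule.subset_span ⟨t, rfl⟩
        have hsum : ∀ G : Finset CantorSp, (∑ x ∈ G, phiC x) ∈ W :=
          fun G => Submodule.sum_mem _ fun x _ => hmem x
        exact Submodule.sub_mem _ (Submodule.add_mem _ (hsum _) (hmem q))
          (Submodule.add_mem _ (hsum _) (hmem p))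
      have hudU : uu a - uu b ∈ U := Submodule.sub_mem _ (huU a) (huU b)
      have hud0 : uu a - uu b = 0 := (Submodule.disjoint_def.1 hUc.disjoint) _ hudW hudU
      have huab : uu a = uu b := sub_eq_zero.1 hud0
      have hsums : (∑ x ∈ FF a, phiC x) + phiC p = (∑ x ∈ FF b, phiC x) + phiC q := by
        have h1 : a = uu a + ∑ x ∈ FF a, phiC x := hzeq a
        have h2 : b = uu b + ∑ x ∈ FF b, phiC x := hzeq b
        rw [h1, h2, huab] at hEq
        linear_combination -hEq
      have hzero : (∑ x ∈ symmDiff (FF a) (FF b), phiC x)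
          + (∑ x ∈ symmDiff ({p} : Finset CantorSp) {q}, phiC x) = 0 := by
        rw [sum_symmDiff_C, sum_symmDiff_C, Finset.sum_singleton, Finset.sum_singleton]
        calc (∑ x ∈ FF a, phiC x + ∑ x ∈ FF b, phiC x) + (phiC p + phiC q)
            = ((∑ x ∈ FF a, phiC x) + phiC p) + ((∑ x ∈ FF b, phiC x) + phiC q) := by abel
          _ = ((∑ x ∈ FF b, phiC x) + phiC q) + ((∑ x ∈ FF b, phiC x) + phiC q) := by
              rw [hsums]
          _ = 0 := add_self_C _
      rw [← sum_symmDiff_C] at hzero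
      have hemp := sum_phiC_eq_zero _ hzero
      have hFab : symmDiff (FF a) (FF b) = symmDiff ({p} : Finset CantorSp) {q} := by
        rw [← symmDiff_eq_bot, Finset.bot_eq_empty]
        exact hemp
      have hpmem : p ∈ symmDiff (FF a) (FF b) := by
        rw [hFab, Finset.mem_symmDiff]
        left
        exact ⟨Finset.mem_singleton_self p, by simpa using hpq⟩
      rw [Finset.mem_symmDiff] at hpmem
      -- in either case `rrC k p ∈ T`, contradicting `τ ∉ T` since `rrC k p = τ`
      have hrp : rrC k p = τ := hp
      simp only [hcol] at hcola hcolb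
      rcases hpmem with ⟨hpa, -⟩ | ⟨hpb, -⟩
      · exact hτT (hrp ▸ mem_of_col_eq hcola hpa)
      · exact hτT (hrp ▸ mem_of_col_eq hcolb hpb)
    · -- A m is empty
      refine ⟨phiC '' CylC 0 (fun i => i.elim0),
        phiC_image_perfect (CylC_perfect 0 _), (CylC_nonempty 0 _).image phiC, ?_⟩
      rintro x - y - -
      rw [Set.disjoint_left]
      rintro v ⟨a, ha, rfl⟩ -
      exact hm ⟨a, ha⟩
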